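/- Let λ > 1, let M > 0, and define f_λ(a) = 2M a^{λ−1} e^{−a²/4} − 4M ∫₀^a r^{λ−1} e^{−r²/4} dr and g_λ(b) = 2M b^{λ−1} e^{−b²/4} + 4M ∫₀^b r^{λ−1} e^{−r²/4} dr for a, b ≥ 0. Then f_λ attains its maximum over [0, ∞) at a_λ = −2 + √(2(1+λ)), i.e. f_λ(a) ≤ f_λ(a_λ) for all a ≥ 0, and g_λ attains its maximum over [0, ∞) at b_λ = 2 + √(2(1+λ)), i.e. g_λ(b) ≤ g_λ(b_λ) for all b ≥ 0. -/

import Mathlib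

open Real MeasureTheory

private lemma aux_max (M p eps : ℝ) (hM : 0 < M) (hp : 0 < p)
    (heps : eps = 1 ∨ eps = -1) (a : ℝ) (ha : 0 ≤ a) :
    2 * M * a ^ p * Real.exp (-a ^ 2 / 4)
      + eps * (4 * M) * ∫ r in (0:ℝ)..a, r ^ p * Real.exp (-r ^ 2 / 4)
    ≤ 2 * M * (2 * eps + Real.sqrt (4 + 2 * p)) ^ p
        * Real.exp (-(2 * eps + Real.sqrt (4 + 2 * p)) ^ 2 / 4)
      + eps * (4 * M) * ∫ r in (0:ℝ)..(2 * eps + Real.sqrt (4 + 2 * p)),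
          r ^ p * Real.exp (-r ^ 2 / 4) := by
  set s := Real.sqrt (4 + 2 * p) with hs
  have hs2 : s ^ 2 = 4 + 2 * p := Real.sq_sqrt (by linarith)
  have hsge : 2 < s := by nlinarith [Real.sqrt_nonneg (4 + 2 * p)]
  have heps2 : eps ^ 2 = 1 := by rcases heps with h | h <;> rw [h] <;> ring
  have hepsle : eps ≤ 1 := by rcases heps with h | h <;> rw [h] <;> norm_num
  set c := 2 * eps + s with hc
  have hc0 : 0 < c := by rcases heps with h | h <;> rw [hc, h] <;> nlinarith
  set φ : ℝ → ℝ := fun x => 2 * M * x ^ p * Real.exp (-x ^ 2 / 4)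
      + eps * (4 * M) * ∫ r in (0:ℝ)..x, r ^ p * Real.exp (-r ^ 2 / 4) with hφ
  -- continuity of the integrand
  have hrp : Continuous fun x : ℝ => x ^ p := by
    rw [continuous_iff_continuousAt]
    intro x
    rcases eq_or_ne x 0 with h | h
    · exact Real.continuousAt_rpow_const x p (Or.inr hp.le)
    · exact Real.continuousAt_rpow_const x p (Or.inl h)
  have hE : Continuous fun x : ℝ => Real.exp (-x ^ 2 / 4) := by continuity
  have hcont : Continuous fun r : ℝ => r ^ p * Real.exp (-r ^ 2 / 4) := hrp.mul hE
  have hFder : ∀ x : ℝ, HasDerivAt (fun y => ∫ r in (0:ℝ)..y, r ^ p * Real.exp (-r ^ 2 / 4))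
      (x ^ p * Real.exp (-x ^ 2 / 4)) x :=
    fun x => (hcont.integral_hasStrictDerivAt 0 x).hasDerivAt
  have hFcont : Continuous fun y => ∫ r in (0:ℝ)..y, r ^ p * Real.exp (-r ^ 2 / 4) :=
    continuous_iff_continuousAt.2 fun x => (hFder x).continuousAt
  have hφcont : Continuous φ :=
    ((continuous_const.mul hrp).mul hE).add (continuous_const.mul hFcont)
  -- derivative of φ away from zero
  have hderiv : ∀ x : ℝ, x ≠ 0 → HasDerivAt φ
      (2 * M * (p * x ^ (p - 1)) * Real.exp (-x ^ 2 / 4)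
        + 2 * M * x ^ p * (-x / 2 * Real.exp (-x ^ 2 / 4))
        + eps * (4 * M) * (x ^ p * Real.exp (-x ^ 2 / 4))) x := by
    intro x hx
    have h1 : HasDerivAt (fun y : ℝ => y ^ p) (p * x ^ (p - 1)) x :=
      Real.hasDerivAt_rpow_const (Or.inl hx)
    have h2 : HasDerivAt (fun y : ℝ => Real.exp (-y ^ 2 / 4))
        (-x / 2 * Real.exp (-x ^ 2 / 4)) x := by
      have hinner : HasDerivAt (fun y : ℝ => -y ^ 2 / 4) (-x / 2) x := by
        have := ((hasDerivAt_pow 2 x).neg).div_const 4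
        exact this.congr_deriv (by push_cast; ring)
      simpa [mul_comm] using hinner.exp
    have := (((h1.const_mul (2 * M)).mul h2).add ((hFder x).const_mul (eps * (4 * M))))
    exact this
  -- rewrite the derivative in factored form
  have hkey : ∀ x : ℝ, 0 < x →
      2 * M * (p * x ^ (p - 1)) * Real.exp (-x ^ 2 / 4)
        + 2 * M * x ^ p * (-x / 2 * Real.exp (-x ^ 2 / 4))
        + eps * (4 * M) * (x ^ p * Real.exp (-x ^ 2 / 4))
      = M * Real.exp (-x ^ 2 / 4) * x ^ (p - 1) * (2 * p - x ^ 2 + 4 * eps * x) := by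
    intro x hx
    have hxp : x ^ p = x ^ (p - 1) * x := by
      rw [← Real.rpow_add_one hx.ne' (p - 1)]; norm_num
    rw [hxp]; ring
  -- monotone on [0, c]
  have hmono : MonotoneOn φ (Set.Icc 0 c) := by
    apply monotoneOn_of_deriv_nonneg (convex_Icc 0 c) hφcont.continuousOn
    · intro x hx
      rw [interior_Icc] at hx
      exact ((hderiv x hx.1.ne').differentiableAt).differentiableWithinAt
    · intro x hx
      rw [interior_Icc] at hx
      rw [(hderiv x hx.1.ne').deriv, hkey x hx.1]
      have hfac : 0 ≤ 2 * p - x ^ 2 + 4 * eps * x := by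
        nlinarith [mul_nonneg (sub_nonneg.mpr hx.2.le)
          (by nlinarith [hx.1, hsge, hepsle] : (0:ℝ) ≤ x + s - 2 * eps),
          hx.1, hx.2, hc, hs2, heps2]
      have h1 : 0 ≤ M * Real.exp (-x ^ 2 / 4) * x ^ (p - 1) :=
        mul_nonneg (mul_nonneg hM.le (Real.exp_pos _).le)
          (Real.rpow_nonneg hx.1.le _)
      exact mul_nonneg h1 hfac
  -- antitone on [c, ∞)
  have hanti : AntitoneOn φ (Set.Ici c) := by
    apply antitoneOn_of_deriv_nonpos (convex_Ici c) hφcont.continuousOn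
    · intro x hx
      rw [interior_Ici] at hx
      exact ((hderiv x (hc0.trans hx).ne').differentiableAt).differentiableWithinAt
    · intro x hx
      rw [interior_Ici] at hx
      have hxpos : 0 < x := hc0.trans hx
      rw [(hderiv x hxpos.ne').deriv, hkey x hxpos]
      have hfac : 2 * p - x ^ 2 + 4 * eps * x ≤ 0 := by
        nlinarith [mul_nonneg (sub_nonneg.mpr hx.le)
          (by nlinarith [hxpos, hsge, hepsle] : (0:ℝ) ≤ x + s - 2 * eps),
          hxpos, hx, hc, hs2, heps2]
      have h1 : 0 ≤ M * Real.exp (-x ^ 2 / 4) * x ^ (p - 1) :=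
        mul_nonneg (mul_nonneg hM.le (Real.exp_pos _).le)
          (Real.rpow_nonneg hxpos.le _)
      exact mul_nonpos_of_nonneg_of_nonpos h1 hfac
  show φ a ≤ φ c
  rcases le_or_gt a c with hac | hac
  · exact hmono ⟨ha, hac⟩ ⟨hc0.le, le_rfl⟩ hac
  · exact hanti Set.self_mem_Ici (Set.mem_Ici.mpr hac.le) hac.le

/-- The functions `f_λ` and `g_λ` attain their maxima over `[0,∞)` at
`a_λ = -2 + √(2(1+λ))` and `b_λ = 2 + √(2(1+λ))` respectively. -/
theorem f_g_attain_max (lam M : ℝ) (hlam : 1 < lam) (hM : 0 < M)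
    (f g : ℝ → ℝ)
    (hf : ∀ a : ℝ, f a = 2 * M * a ^ (lam - 1) * exp (-a ^ 2 / 4)
        - 4 * M * ∫ r in (0:ℝ)..a, r ^ (lam - 1) * exp (-r ^ 2 / 4))
    (hg : ∀ b : ℝ, g b = 2 * M * b ^ (lam - 1) * exp (-b ^ 2 / 4)
        + 4 * M * ∫ r in (0:ℝ)..b, r ^ (lam - 1) * exp (-r ^ 2 / 4)) :
    (∀ a : ℝ, 0 ≤ a → f a ≤ f (-2 + Real.sqrt (2 * (1 + lam)))) ∧
    (∀ b : ℝ, 0 ≤ b → g b ≤ g (2 + Real.sqrt (2 * (1 + lam)))) := by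
  have hp : 0 < lam - 1 := by linarith
  have hsq : Real.sqrt (4 + 2 * (lam - 1)) = Real.sqrt (2 * (1 + lam)) := by
    rw [show (4 + 2 * (lam - 1)) = 2 * (1 + lam) by ring]
  constructor
  · intro a ha
    have h := aux_max M (lam - 1) (-1) hM hp (Or.inr rfl) a ha
    rw [hsq] at h
    have hca : (2 * (-1:ℝ) + Real.sqrt (2 * (1 + lam)))
        = -2 + Real.sqrt (2 * (1 + lam)) := by ring
    rw [hca] at h
    rw [hf a, hf (-2 + Real.sqrt (2 * (1 + lam)))]
    linarith
  · intro b hb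
    have h := aux_max M (lam - 1) 1 hM hp (Or.inl rfl) b hb
    rw [hsq] at h
    have hca : (2 * (1:ℝ) + Real.sqrt (2 * (1 + lam)))
        = 2 + Real.sqrt (2 * (1 + lam)) := by ring
    rw [hca] at h
    rw [hg b, hg (2 + Real.sqrt (2 * (1 + lam)))]
    linarith
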